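/- Let n ≥ 1, D ≥ 1 be integers, let Ω ⊆ ℂⁿ be a nonempty open connected subset, and let (f_m)_{m∈ℕ} be a sequence of maps ℂⁿ → ℂⁿ, each holomorphic on Ω, converging locally uniformly on Ω to the identity map. Suppose there is a nonempty open subset Ω′ ⊆ Ω whose closure is compact and contained in Ω such that for every m, every point x in the closure of Ω′ and every i with 1 ≤ i ≤ D, the i-th iterate f_m^{[i]}(x) lies in Ω, and such that f_m^{[D]}(x) = x for every x ∈ Ω′ and every m. Then there exists m₀ ∈ ℕ such that f_m(x) = x for all x ∈ Ω and all m ≥ m₀. -/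

import Mathlib

open Filter Topology Metric Set

lemma aux_ball_id {E : Type*} [NormedAddCommGroup E] [NormedSpace ℂ E] [CompleteSpace E]
    {g : E → E} {c : E} {ρ : ℝ}
    (hd : DifferentiableOn ℂ g (ball c ρ))
    (hloc : ∀ᶠ y in 𝓝 c, g y = y) : ∀ z ∈ ball c ρ, g z = z := by
  intro z hz
  rcases eq_or_ne z c with rfl | hzc
  · exact hloc.self_of_nhds
  have hvz : 0 < ‖z - c‖ := by simpa [sub_ne_zero] using hzc
  set R : ℝ := ρ / ‖z - c‖ with hR
  have hzρ : ‖z - c‖ < ρ := by simpa [mem_ball, dist_eq_norm] using hz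
  have hR1 : 1 < R := (one_lt_div hvz).2 hzρ
  set L : ℂ → E := fun t => c + t • (z - c) with hL
  have hmaps : ∀ t : ℂ, t ∈ ball (0 : ℂ) R → L t ∈ ball c ρ := by
    intro t ht
    have ht' : ‖t‖ < R := by simpa [mem_ball, dist_eq_norm] using ht
    simp only [hL, mem_ball, dist_eq_norm, add_sub_cancel_left, norm_smul]
    calc ‖t‖ * ‖z - c‖ < R * ‖z - c‖ := mul_lt_mul_of_pos_right ht' hvz
      _ = ρ := div_mul_cancel₀ _ (ne_of_gt hvz)
  have hLd : Differentiable ℂ L := (differentiable_const c).add (differentiable_id.smul_const _)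
  set φ : ℂ → E := fun t => g (L t) - L t with hφ
  have hφd : DifferentiableOn ℂ φ (ball (0 : ℂ) R) := by
    intro t ht
    have h1 : DifferentiableAt ℂ (fun t => g (L t)) t :=
      (hd.differentiableAt (isOpen_ball.mem_nhds (hmaps t ht))).comp t (hLd t)
    exact (h1.sub (hLd t)).differentiableWithinAt
  have hφa : AnalyticOnNhd ℂ φ (ball (0 : ℂ) R) := hφd.analyticOnNhd isOpen_ball
  have hL0 : L 0 = c := by simp [hL]
  have hev : φ =ᶠ[𝓝 (0 : ℂ)] 0 := by
    have hc : Filter.Tendsto L (𝓝 0) (𝓝 c) := by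
      simpa [ContinuousAt, hL0] using (hLd.continuous.continuousAt (x := (0 : ℂ)))
    filter_upwards [hc.eventually hloc] with t ht
    simp [hφ, ht]
  have h0R : (0 : ℂ) ∈ ball (0 : ℂ) R := mem_ball_self (lt_trans one_pos hR1)
  have h1R : (1 : ℂ) ∈ ball (0 : ℂ) R := by
    simpa [mem_ball, dist_eq_norm] using hR1
  have hz0 := hφa.eqOn_zero_of_preconnected_of_eventuallyEq_zero
    ((convex_ball (0 : ℂ) R).isPreconnected) h0R hev h1R
  have hL1 : L 1 = z := by simp [hL]
  have : g z - z = 0 := by simpa [hφ, hL1] using hz0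
  exact sub_eq_zero.1 this

lemma aux_identity {E : Type*} [NormedAddCommGroup E] [NormedSpace ℂ E] [CompleteSpace E]
    {g : E → E} {Ω : Set E} (hΩo : IsOpen Ω) (hΩc : IsPreconnected Ω)
    (hd : DifferentiableOn ℂ g Ω) {x₁ : E} (hx₁ : x₁ ∈ Ω)
    (hloc : ∀ᶠ y in 𝓝 x₁, g y = y) : ∀ x ∈ Ω, g x = x := by
  set S : Set E := {x | ∀ᶠ y in 𝓝 x, g y = y} with hS
  have hSo : IsOpen S := isOpen_setOf_eventually_nhds
  have hsub : Ω ⊆ S := by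
    apply hΩc.subset_of_closure_inter_subset hSo ⟨x₁, hx₁, hloc⟩
    rintro x ⟨hxc, hxΩ⟩
    obtain ⟨ρ, hρ, hball⟩ := Metric.isOpen_iff.1 hΩo x hxΩ
    obtain ⟨y, hyS, hyx⟩ := Metric.mem_closure_iff.1 hxc (ρ / 2) (by linarith)
    have hby : ball y (ρ / 2) ⊆ Ω := by
      intro w hw
      apply hball
      rw [mem_ball] at hw ⊢
      calc dist w x ≤ dist w y + dist y x := dist_triangle _ _ _
        _ < ρ / 2 + ρ / 2 := add_lt_add hw (by rwa [dist_comm] at hyx)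
        _ = ρ := by ring
    have hid := aux_ball_id (hd.mono hby) hyS
    have hxmem : x ∈ ball y (ρ / 2) := by rwa [mem_ball]
    exact Filter.eventually_of_mem (isOpen_ball.mem_nhds hxmem) fun w hw => hid w hw
  exact fun x hx => (hsub hx).self_of_nhds

lemma aux_schwarz {E : Type*} [NormedAddCommGroup E] [NormedSpace ℂ E]
    {u : E → E} {x₀ : E} {r C : ℝ} (hC : 0 < C)
    (hd : DifferentiableOn ℂ u (ball x₀ r))
    (hb : ∀ w ∈ ball x₀ r, ‖u w‖ ≤ C)
    {x y : E} (hx : x ∈ ball x₀ (r / 4)) (hy : y ∈ ball x₀ (r / 4)) :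
    ‖u y - u x‖ ≤ 4 * C / r * ‖y - x‖ := by
  have hr : 0 < r := by
    have h1 := mem_ball.1 hx
    nlinarith [dist_nonneg (x := x) (y := x₀)]
  rcases eq_or_ne y x with rfl | hyx
  · simp [mul_nonneg, div_nonneg, hC.le, hr.le]
  set v : E := y - x with hv
  have hvz : 0 < ‖v‖ := by simpa [hv, sub_ne_zero] using hyx
  have hvlt : ‖v‖ < r / 2 := by
    have h1 := mem_ball.1 hx
    have h2 := mem_ball.1 hy
    calc ‖v‖ = dist y x := by rw [dist_eq_norm]
      _ ≤ dist y x₀ + dist x₀ x := dist_triangle _ _ _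
      _ < r / 4 + r / 4 := add_lt_add h2 (by rwa [dist_comm] at h1)
      _ = r / 2 := by ring
  set R : ℝ := 3 * r / 4 / ‖v‖ with hR
  have hR1 : 1 < R := by
    rw [hR, lt_div_iff₀ hvz]
    nlinarith
  set ψ : ℂ → E := fun t => u (x + t • v) with hψ
  have hline : ∀ t : ℂ, t ∈ ball (0 : ℂ) R → x + t • v ∈ ball x₀ r := by
    intro t ht
    have ht' : ‖t‖ < R := by simpa [mem_ball, dist_eq_norm] using ht
    rw [mem_ball, dist_eq_norm]
    have h1 : ‖x - x₀‖ < r / 4 := by rw [← dist_eq_norm]; exact mem_ball.1 hx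
    have h2 : ‖t‖ * ‖v‖ ≤ R * ‖v‖ := mul_le_mul_of_nonneg_right ht'.le hvz.le
    have h3 : R * ‖v‖ = 3 * r / 4 := by rw [hR, div_mul_cancel₀ _ (ne_of_gt hvz)]
    calc ‖x + t • v - x₀‖ = ‖(x - x₀) + t • v‖ := by rw [add_sub_right_comm]
      _ ≤ ‖x - x₀‖ + ‖t • v‖ := norm_add_le _ _
      _ = ‖x - x₀‖ + ‖t‖ * ‖v‖ := by rw [norm_smul]
      _ < r / 4 + 3 * r / 4 := by
          apply add_lt_add_of_lt_of_le h1; rw [← h3]; exact h2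
      _ = r := by ring
  have hψd : DifferentiableOn ℂ ψ (ball (0 : ℂ) R) := by
    intro t ht
    have hLd : DifferentiableAt ℂ (fun t : ℂ => x + t • v) t :=
      (differentiableAt_const x).add (differentiableAt_id.smul_const v)
    exact ((hd.differentiableAt (isOpen_ball.mem_nhds (hline t ht))).comp t
      hLd).differentiableWithinAt
  have hψ0 : ψ 0 = u x := by simp [hψ]
  have hψ1 : ψ 1 = u y := by simp [hψ, hv]
  have hxball : x ∈ ball x₀ r := by
    rw [mem_ball] at hx ⊢; linarith [mem_ball.1 hx]
  have hmaps : MapsTo ψ (ball (0 : ℂ) R) (ball (ψ 0) (3 * C)) := by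
    intro t ht
    rw [mem_ball]
    calc dist (ψ t) (ψ 0) ≤ ‖ψ t‖ + ‖ψ 0‖ := dist_le_norm_add_norm _ _
      _ ≤ C + C := add_le_add (hb _ (hline t ht)) (by rw [hψ0]; exact hb x hxball)
      _ < 3 * C := by linarith
  have h1R : (1 : ℂ) ∈ ball (0 : ℂ) R := by
    simpa [mem_ball, dist_eq_norm] using hR1
  have hsch := Complex.dist_le_div_mul_dist_of_mapsTo_ball hψd (hmaps.mono_right ball_subset_closedBall) h1R
  have hdist1 : dist (1 : ℂ) 0 = 1 := by simp
  rw [hψ0, hψ1, hdist1, mul_one, dist_eq_norm] at hsch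
  calc ‖u y - u x‖ ≤ 3 * C / R := hsch
    _ = 4 * C / r * ‖v‖ := by
        rw [hR]
        field_simp

set_option maxHeartbeats 1000000 in
theorem stmt0 (n D : ℕ) (hn : 1 ≤ n) (hD : 1 ≤ D)
    (Ω : Set (EuclideanSpace ℂ (Fin n))) (hΩne : Ω.Nonempty) (hΩopen : IsOpen Ω)
    (hΩconn : IsConnected Ω)
    (f : ℕ → EuclideanSpace ℂ (Fin n) → EuclideanSpace ℂ (Fin n))
    (hf : ∀ m, DifferentiableOn ℂ (f m) Ω)
    (hconv : TendstoLocallyUniformlyOn (fun m => f m) id atTop Ω)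
    (Ω' : Set (EuclideanSpace ℂ (Fin n))) (hΩ'ne : Ω'.Nonempty) (hΩ'open : IsOpen Ω')
    (hΩ'sub : Ω' ⊆ Ω) (hΩ'cpt : IsCompact (closure Ω')) (hclsub : closure Ω' ⊆ Ω)
    (hiter : ∀ m, ∀ x ∈ closure Ω', ∀ i, 1 ≤ i → i ≤ D → (f m)^[i] x ∈ Ω)
    (hord : ∀ m, ∀ x ∈ Ω', (f m)^[D] x = x) :
    ∃ m₀ : ℕ, ∀ m ≥ m₀, ∀ x ∈ Ω, f m x = x := by
  classical
  obtain ⟨x₀, hx₀⟩ := hΩ'ne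
  obtain ⟨r, hr, hball⟩ := Metric.isOpen_iff.1 hΩ'open x₀ hx₀
  obtain ⟨δ, hδ, hthick⟩ := hΩ'cpt.exists_thickening_subset_open hΩopen hclsub
  set K : Set (EuclideanSpace ℂ (Fin n)) := cthickening (δ / 2) (closure Ω') with hK
  have hKcpt : IsCompact K := hΩ'cpt.cthickening
  have hKΩ : K ⊆ Ω := (cthickening_subset_thickening' hδ (by linarith) _).trans hthick
  have hΩ'K : closure Ω' ⊆ K := self_subset_cthickening _
  have hD0 : (0 : ℝ) < D := by exact_mod_cast hD
  have hDne : ((D : ℂ)) ≠ 0 := Nat.cast_ne_zero.2 (by omega)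
  have hD1 : (1 : ℝ) ≤ D := by exact_mod_cast hD
  set ε : ℝ := min (δ / (2 * D)) (r / (32 * D)) with hε
  have hεpos : 0 < ε := lt_min (by positivity) (by positivity)
  have hεδ : D * ε ≤ δ / 2 := by
    have h1 := min_le_left (δ / (2 * D)) (r / (32 * D))
    calc D * ε ≤ D * (δ / (2 * D)) := by nlinarith
      _ = δ / 2 := by field_simp
  have hεr : D * ε ≤ r / 32 := by
    have h1 := min_le_right (δ / (2 * D)) (r / (32 * D))
    calc D * ε ≤ D * (r / (32 * D)) := by nlinarith
      _ = r / 32 := by field_simp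
  have huc : TendstoUniformlyOn (fun m => f m) id atTop K :=
    (tendstoLocallyUniformlyOn_iff_forall_isCompact hΩopen).1 hconv K hKΩ hKcpt
  rw [Metric.tendstoUniformlyOn_iff] at huc
  obtain ⟨m₀, hm₀⟩ := Filter.eventually_atTop.1 (huc ε hεpos)
  refine ⟨m₀, fun m hm => ?_⟩
  set g := f m with hg
  have hgd : DifferentiableOn ℂ g Ω := hf m
  have hsmall : ∀ x ∈ K, ‖g x - x‖ < ε := by
    intro x hx
    have := hm₀ m hm x hx
    rwa [id_eq, dist_comm, dist_eq_norm] at this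
  -- Step A : iterates remain close to the starting point
  have hiterbound : ∀ i, i ≤ D → ∀ x ∈ closure Ω', ‖g^[i] x - x‖ ≤ i * ε := by
    intro i
    induction i with
    | zero => intro _ x _; simp
    | succ i ih =>
      intro hiD x hx
      have hi : i ≤ D := Nat.le_of_succ_le hiD
      have hIH := ih hi x hx
      have hmem : g^[i] x ∈ K := by
        apply mem_cthickening_of_dist_le _ x _ _ hx
        calc dist (g^[i] x) x = ‖g^[i] x - x‖ := dist_eq_norm _ _
          _ ≤ i * ε := hIH
          _ ≤ D * ε := by
              have hiD' : (i : ℝ) ≤ D := by exact_mod_cast hi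
              nlinarith
          _ ≤ δ / 2 := hεδ
      rw [Function.iterate_succ_apply']
      calc ‖g (g^[i] x) - x‖ ≤ ‖g (g^[i] x) - g^[i] x‖ + ‖g^[i] x - x‖ :=
            norm_sub_le_norm_sub_add_norm_sub _ _ _
        _ ≤ ε + i * ε := add_le_add (hsmall _ hmem).le hIH
        _ = (i + 1 : ℕ) * ε := by push_cast; ring
  -- differentiability of the iterates on Ω'
  have hiterdiff : ∀ i, 1 ≤ i → i ≤ D → ∀ x ∈ Ω', DifferentiableAt ℂ (g^[i]) x := by
    intro i
    induction i with
    | zero => intro h; omega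
    | succ i ih =>
      intro _ hiD x hx
      rcases Nat.eq_zero_or_pos i with rfl | hi
      · rw [Function.iterate_one]
        exact hgd.differentiableAt (hΩopen.mem_nhds (hΩ'sub hx))
      · have h1 : DifferentiableAt ℂ (g^[i]) x := ih hi (Nat.le_of_succ_le hiD) x hx
        have h2 : g^[i] x ∈ Ω := hiter m x (subset_closure hx) i hi (Nat.le_of_succ_le hiD)
        have h3 : DifferentiableAt ℂ g (g^[i] x) := hgd.differentiableAt (hΩopen.mem_nhds h2)
        rw [Function.iterate_succ']
        exact h3.comp x h1
  -- the averaged map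
  set h : EuclideanSpace ℂ (Fin n) → EuclideanSpace ℂ (Fin n) :=
    fun x => (D : ℂ)⁻¹ • ∑ i ∈ Finset.range D, g^[i + 1] x with hh
  have hinv : ∀ x ∈ Ω', h (g x) = h x := by
    intro x hx
    have hDx : g^[D] x = x := hord m x hx
    have hsum : ∑ i ∈ Finset.range D, g^[i + 1] (g x) = ∑ i ∈ Finset.range D, g^[i + 1] x := by
      have e1 : ∀ i, g^[i + 1] (g x) = g^[i + 1 + 1] x :=
        fun i => (Function.iterate_succ_apply g (i + 1) x).symm
      have hGD : g^[D + 1] x = g^[0 + 1] x := by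
        rw [Function.iterate_succ_apply', hDx]
        simp
      have h1 : ∑ i ∈ Finset.range (D + 1), g^[i + 1] x
          = (∑ i ∈ Finset.range D, g^[i + 1 + 1] x) + g^[0 + 1] x :=
        Finset.sum_range_succ' (fun i => g^[i + 1] x) D
      have h2 : ∑ i ∈ Finset.range (D + 1), g^[i + 1] x
          = (∑ i ∈ Finset.range D, g^[i + 1] x) + g^[D + 1] x :=
        Finset.sum_range_succ (fun i => g^[i + 1] x) D
      simp only [e1]
      rw [hGD] at h2
      exact add_right_cancel (h1.symm.trans h2)
    simp only [hh, hsum]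
  have hbound : ∀ x ∈ closure Ω', ‖h x - x‖ ≤ D * ε := by
    intro x hx
    have hx' : h x - x = (D : ℂ)⁻¹ • ∑ i ∈ Finset.range D, (g^[i + 1] x - x) := by
      rw [Finset.sum_sub_distrib, smul_sub, Finset.sum_const, Finset.card_range]
      congr 1
      rw [← Nat.cast_smul_eq_nsmul ℂ, inv_smul_smul₀ hDne]
    have hterm : ∀ i ∈ Finset.range D, ‖g^[i + 1] x - x‖ ≤ D * ε := by
      intro i hi
      have hi' : i + 1 ≤ D := Finset.mem_range.1 hi
      calc ‖g^[i + 1] x - x‖ ≤ (i + 1 : ℕ) * ε := hiterbound (i + 1) hi' x hx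
        _ ≤ D * ε := by
            have : ((i : ℝ) + 1) ≤ D := by exact_mod_cast hi'
            push_cast
            nlinarith
    have hsumb : ‖∑ i ∈ Finset.range D, (g^[i + 1] x - x)‖ ≤ D * (D * ε) := by
      calc ‖∑ i ∈ Finset.range D, (g^[i + 1] x - x)‖
          ≤ ∑ i ∈ Finset.range D, ‖g^[i + 1] x - x‖ := norm_sum_le _ _
        _ ≤ ∑ _i ∈ Finset.range D, (D * ε) := Finset.sum_le_sum hterm
        _ = D * (D * ε) := by rw [Finset.sum_const, Finset.card_range, nsmul_eq_mul]
    rw [hx', norm_smul]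
    have hnormD : ‖(D : ℂ)⁻¹‖ = (D : ℝ)⁻¹ := by
      rw [norm_inv, Complex.norm_natCast]
    calc ‖(D : ℂ)⁻¹‖ * ‖∑ i ∈ Finset.range D, (g^[i + 1] x - x)‖
        ≤ (D : ℝ)⁻¹ * (D * (D * ε)) := by
          rw [hnormD]
          exact mul_le_mul_of_nonneg_left hsumb (by positivity)
      _ = D * ε := by field_simp
  have hhd : DifferentiableOn ℂ (fun w => h w - w) (ball x₀ r) := by
    intro w hw
    have hwΩ' : w ∈ Ω' := hball hw
    have hhdiff : DifferentiableAt ℂ h w := by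
      rw [hh]
      apply DifferentiableAt.fun_const_smul
      apply DifferentiableAt.fun_sum
      intro i hi
      exact hiterdiff (i + 1) (Nat.succ_le_succ (Nat.zero_le _)) (Finset.mem_range.1 hi) w hwΩ'
    exact (hhdiff.sub differentiableAt_id).differentiableWithinAt
  -- local fixed points
  have hfix : ∀ x ∈ ball x₀ (r / 8), g x = x := by
    intro x hx
    have hxr : x ∈ ball x₀ r := by rw [mem_ball] at hx ⊢; linarith [mem_ball.1 hx]
    have hxΩ' : x ∈ Ω' := hball hxr
    have hxK : x ∈ K := hΩ'K (subset_closure hxΩ')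
    have hgx : ‖g x - x‖ < ε := hsmall x hxK
    have hεsmall : ε ≤ r / 32 := by nlinarith [hεr, hεpos, hD1]
    have hx4 : x ∈ ball x₀ (r / 4) := by rw [mem_ball] at hx ⊢; linarith [mem_ball.1 hx]
    have hy4 : g x ∈ ball x₀ (r / 4) := by
      rw [mem_ball, dist_eq_norm]
      calc ‖g x - x₀‖ ≤ ‖g x - x‖ + ‖x - x₀‖ := norm_sub_le_norm_sub_add_norm_sub _ _ _
        _ < ε + r / 8 := add_lt_add hgx (by rw [← dist_eq_norm]; exact mem_ball.1 hx)
        _ ≤ r / 32 + r / 8 := by linarith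
        _ < r / 4 := by linarith
    have hub : ∀ w ∈ ball x₀ r, ‖h w - w‖ ≤ D * ε :=
      fun w hw => hbound w (subset_closure (hball hw))
    have hCpos : 0 < D * ε := by positivity
    have hsch := aux_schwarz hCpos hhd hub hx4 hy4
    rw [hinv x hxΩ'] at hsch
    have hlhs : ‖h x - g x - (h x - x)‖ = ‖g x - x‖ := by
      rw [show h x - g x - (h x - x) = -(g x - x) by abel, norm_neg]
    rw [hlhs] at hsch
    have hcoef : 4 * (D * ε) / r ≤ 1 / 2 := by
      rw [div_le_div_iff₀ hr (by norm_num)]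
      nlinarith
    have hnn := norm_nonneg (g x - x)
    have h2 : 4 * ((D : ℝ) * ε) / r * ‖g x - x‖ ≤ 1 / 2 * ‖g x - x‖ :=
      mul_le_mul_of_nonneg_right hcoef hnn
    have h3 : ‖g x - x‖ ≤ 0 := by linarith
    have h4 : g x - x = 0 := norm_le_zero_iff.1 h3
    exact sub_eq_zero.1 h4
  have hev : ∀ᶠ y in 𝓝 x₀, g y = y :=
    Filter.eventually_of_mem (isOpen_ball.mem_nhds (mem_ball_self (by positivity)))
      fun w hw => hfix w hw
  exact aux_identity hΩopen hΩconn.isPreconnected hgd (hΩ'sub hx₀) hev
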